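/- Let n ∈ ℕ, let L ⊆ {0,1}ⁿ be a language all of whose words have length exactly n, and let θ ∈ (0, 2]. Then Isom_θ(L·((01)ⁿ)*) is isomorphic to Isom_θ(L)^ℕ, the direct product of countably many copies of Isom_θ(L), where L·((01)ⁿ)* = {u·(01)^{kn} : u ∈ L, k ∈ ℕ₀}. -/

import Mathlib

/-- Restored from older Mathlib (`Mathlib.Data.List.EditDistance.Defs`), since removed:
a cost structure for edit operations. -/
structure Levenshtein.Cost (α β δ : Type*) where
  /-- Cost to delete an element from a list. -/
  delete : α → δ
  /-- Cost to insert an element into a list. -/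
  insert : β → δ
  /-- Cost to substitute one element for another in a list. -/
  substitute : α → β → δ

/-- Restored from older Mathlib: one step of the dynamic program. -/
def Levenshtein.impl {α β δ : Type*} (C : Levenshtein.Cost α β δ) [Add δ] [Min δ]
    (xs : List α) (y : β) (d : {r : List δ // 0 < r.length}) :
    {r : List δ // 0 < r.length} :=
  let ⟨ds, w⟩ := d
  xs.zip (ds.zip ds.tail) |>.foldr
    (init := ⟨[C.insert y + ds.getLast (List.ne_nil_of_length_pos w)], by simp⟩)
    (fun ⟨x, d₀, d₁⟩ ⟨r, w⟩ =>
      ⟨min (C.delete x + r[0]) (min (C.insert y + d₀) (C.substitute x y + d₁)) :: r, by simp⟩)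

/-- Restored from older Mathlib: Levenshtein distances of all suffixes of `xs` to `ys`. -/
def suffixLevenshtein {α β δ : Type*} (C : Levenshtein.Cost α β δ) [AddZeroClass δ] [Min δ]
    (xs : List α) (ys : List β) : {r : List δ // 0 < r.length} :=
  ys.foldr
    (Levenshtein.impl C xs)
    (xs.foldr (init := ⟨[0], by simp⟩) (fun a ⟨r, w⟩ => ⟨(C.delete a + r[0]) :: r, by simp⟩))

/-- Restored from older Mathlib: the (generalized) Levenshtein distance. -/
def levenshtein {α β δ : Type*} (C : Levenshtein.Cost α β δ) [AddZeroClass δ] [Min δ]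
    (xs : List α) (ys : List β) : δ :=
  let ⟨r, w⟩ := suffixLevenshtein C xs ys
  r[0]

/-- Cost structure for the generalized Levenshtein distance:
insertions and deletions cost `γ`, substitutions cost `θ`. -/
def levCost (A : Type*) [DecidableEq A] (γ θ : ℝ) : Levenshtein.Cost A A ℝ where
  delete _ := γ
  insert _ := γ
  substitute a b := if a = b then 0 else θ

/-- The generalized Levenshtein distance `lev_{γ,θ}` between two words over `A`:
the minimal total cost of transforming one word into the other by insertions and
deletions (of cost `γ`) and substitutions (of cost `θ`). -/
def lev {A : Type*} [DecidableEq A] (γ θ : ℝ) (u v : List A) : ℝ :=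
  levenshtein (levCost A γ θ) u v

/-- The isometry group of a language `L ⊆ A*` with respect to a distance `d` on `A*`:
the group (under composition) of bijections of `L` preserving `d`. -/
def IsomGroup {A : Type*} (d : List A → List A → ℝ) (L : Set (List A)) :
    Subgroup (Equiv.Perm L) where
  carrier := {φ : Equiv.Perm L | ∀ u v : L, d (φ u) (φ v) = d u v}
  one_mem' := by intro u v; rfl
  mul_mem' := by intro φ ψ hφ hψ u v; simp only [Equiv.Perm.mul_apply]; rw [hφ, hψ]
  inv_mem' := by
    intro φ hφ u v
    have h := hφ (φ⁻¹ u) (φ⁻¹ v)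
    simpa using h.symm

/-- The word `(01)ᵏ` over `{0,1}` (with `0 = false`, `1 = true`). -/
def pat (k : ℕ) : List Bool := (List.replicate k [false, true]).flatten


section LevAux

theorem lvA_head_eq {δ : Type*} {l : List δ} {a : δ} {t : List δ} (h : l = a :: t)
    (p : 0 < l.length) : l[0]'p = a := by
  subst h; rfl

theorem lvA_getLast_eq {δ : Type*} {l : List δ} {a : δ} (h : l = [a]) (p : l ≠ []) :
    l.getLast p = a := by
  subst h; rfl

theorem lvA_head_tail {δ : Type*} (s : {r : List δ // 0 < r.length}) :
    s.1 = s.1[0]'s.2 :: s.1.tail := by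
  obtain ⟨l, w⟩ := s
  cases l with
  | nil => simp at w
  | cons a l => rfl

theorem lvA_impl_cons {α β δ : Type*} (C : Levenshtein.Cost α β δ) [Add δ] [Min δ]
    (x : α) (xs : List α) (y : β) (d t : {r : List δ // 0 < r.length}) (a : δ)
    (h : d.1 = a :: t.1) :
    (Levenshtein.impl C (x::xs) y d).1 =
      min (C.delete x + (Levenshtein.impl C xs y t).1[0]'(Levenshtein.impl C xs y t).2)
        (min (C.insert y + a) (C.substitute x y + t.1[0]'t.2)) ::
        (Levenshtein.impl C xs y t).1 := by
  obtain ⟨dl, dw⟩ := d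
  obtain ⟨tl, tw⟩ := t
  simp only at h
  subst h
  match tl, tw with
  | t0 :: ts, _ => rfl

theorem lvA_lev_def {α β δ : Type*} (C : Levenshtein.Cost α β δ) [AddZeroClass δ] [Min δ]
    (xs : List α) (ys : List β) :
    levenshtein C xs ys = (suffixLevenshtein C xs ys).1[0]'(suffixLevenshtein C xs ys).2 := rfl

theorem lvA_suffix_tail {α β δ : Type*} (C : Levenshtein.Cost α β δ) [AddZeroClass δ] [Min δ]
    (x : α) (xs : List α) (ys : List β) :
    (suffixLevenshtein C (x::xs) ys).1.tail = (suffixLevenshtein C xs ys).1 := by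
  induction ys with
  | nil => rfl
  | cons y ys ih =>
    have h : (suffixLevenshtein C (x::xs) ys).1 =
        (suffixLevenshtein C (x::xs) ys).1[0]'(suffixLevenshtein C (x::xs) ys).2 ::
          (suffixLevenshtein C xs ys).1 := by
      rw [← ih]; exact lvA_head_tail _
    show (Levenshtein.impl C (x::xs) y (suffixLevenshtein C (x::xs) ys)).1.tail =
      (Levenshtein.impl C xs y (suffixLevenshtein C xs ys)).1
    rw [lvA_impl_cons C x xs y _ _ _ h]
    rfl

theorem lvA_suffix_cons {α β δ : Type*} (C : Levenshtein.Cost α β δ) [AddZeroClass δ] [Min δ]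
    (x : α) (xs : List α) (ys : List β) :
    (suffixLevenshtein C (x::xs) ys).1 =
      levenshtein C (x::xs) ys :: (suffixLevenshtein C xs ys).1 := by
  rw [← lvA_suffix_tail C x xs ys, lvA_lev_def]
  exact lvA_head_tail _

theorem lvA_suffix_nil {α β δ : Type*} (C : Levenshtein.Cost α β δ) [AddZeroClass δ] [Min δ]
    (ys : List β) : (suffixLevenshtein C ([] : List α) ys).1 = [levenshtein C [] ys] := by
  cases ys <;> rfl

@[simp] theorem levenshtein_nil_nil {α β δ : Type*} (C : Levenshtein.Cost α β δ)
    [AddZeroClass δ] [Min δ] : levenshtein C ([] : List α) ([] : List β) = 0 := rfl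

@[simp] theorem levenshtein_nil_cons {α β δ : Type*} (C : Levenshtein.Cost α β δ)
    [AddZeroClass δ] [Min δ] (y : β) (ys : List β) :
    levenshtein C ([] : List α) (y :: ys) = C.insert y + levenshtein C [] ys := by
  have e : levenshtein C ([] : List α) (y :: ys) = C.insert y +
      (suffixLevenshtein C ([] : List α) ys).1.getLast
        (List.ne_nil_of_length_pos (suffixLevenshtein C ([] : List α) ys).2) := rfl
  rw [e, lvA_getLast_eq (lvA_suffix_nil C ys)]

@[simp] theorem levenshtein_cons_nil {α β δ : Type*} (C : Levenshtein.Cost α β δ)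
    [AddZeroClass δ] [Min δ] (x : α) (xs : List α) :
    levenshtein C (x :: xs) ([] : List β) = C.delete x + levenshtein C xs [] := rfl

theorem levenshtein_cons_cons {α β δ : Type*} (C : Levenshtein.Cost α β δ)
    [AddZeroClass δ] [Min δ] (x : α) (xs : List α) (y : β) (ys : List β) :
    levenshtein C (x :: xs) (y :: ys) =
      min (C.delete x + levenshtein C xs (y :: ys))
        (min (C.insert y + levenshtein C (x :: xs) ys)
          (C.substitute x y + levenshtein C xs ys)) := by
  have e := lvA_impl_cons C x xs y _ _ _ (lvA_suffix_cons C x xs ys)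
  have e2 : levenshtein C (x :: xs) (y :: ys) =
      (Levenshtein.impl C (x::xs) y (suffixLevenshtein C (x::xs) ys)).1[0]'
        (Levenshtein.impl C (x::xs) y (suffixLevenshtein C (x::xs) ys)).2 := rfl
  rw [e2, lvA_head_eq e]
  rfl

end LevAux

namespace SL15
variable {θ : ℝ}

theorem lev_nil (y : List Bool) : lev 1 θ [] y = y.length := by
  induction y with
  | nil => simp [lev]
  | cons b y ih => simp [lev, levCost] at ih ⊢; rw [ih]; push_cast; ring

theorem lev_nil' (x : List Bool) : lev 1 θ x [] = x.length := by
  induction x with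
  | nil => simp [lev]
  | cons b x ih => simp [lev, levCost] at ih ⊢; rw [ih]; push_cast; ring

theorem lev_cc (a b : Bool) (x y : List Bool) :
    lev 1 θ (a::x) (b::y) = min (1 + lev 1 θ x (b::y))
      (min (1 + lev 1 θ (a::x) y) ((if a = b then 0 else θ) + lev 1 θ x y)) := by
  simp [lev, levCost, levenshtein_cons_cons]

theorem lev_nonneg (hθ : 0 ≤ θ) : ∀ x y : List Bool, 0 ≤ lev 1 θ x y := by
  suffices H : ∀ N x y, x.length + y.length ≤ N → 0 ≤ lev 1 θ x y from
    fun x y => H _ x y le_rfl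
  intro N
  induction N with
  | zero =>
    intro x y h
    cases x <;> cases y <;> simp_all [lev]
  | succ N ih =>
    intro x y h
    match x, y with
    | [], y => rw [lev_nil]; positivity
    | x, [] => rw [lev_nil']; positivity
    | a::x, b::y =>
      rw [lev_cc]
      simp only [List.length_cons] at h
      have h1 : 0 ≤ 1 + lev 1 θ x (b::y) := by
        have := ih x (b::y) (by simp only [List.length_cons]; omega); linarith
      have h2 : 0 ≤ 1 + lev 1 θ (a::x) y := by
        have := ih (a::x) y (by simp only [List.length_cons]; omega); linarith
      have h3 : 0 ≤ (if a = b then 0 else θ) + lev 1 θ x y := by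
        have := ih x y (by omega)
        split <;> linarith
      simp [le_min_iff, h1, h2, h3]

theorem lev_self (hθ : 0 ≤ θ) (x : List Bool) : lev 1 θ x x = 0 := by
  refine le_antisymm ?_ (lev_nonneg hθ x x)
  induction x with
  | nil => simp [lev]
  | cons a x ih =>
    rw [lev_cc]
    refine le_trans (min_le_right _ _) (le_trans (min_le_right _ _) ?_)
    simp [ih]

theorem lev_del_le (hθ : 0 ≤ θ) (a : Bool) (x y : List Bool) :
    lev 1 θ (a::x) y ≤ 1 + lev 1 θ x y := by
  cases y with
  | nil => rw [lev_nil', lev_nil']; push_cast [List.length_cons]; linarith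
  | cons b y => rw [lev_cc]; exact min_le_left _ _

theorem lev_ins_le (hθ : 0 ≤ θ) (b : Bool) (x y : List Bool) :
    lev 1 θ x (b::y) ≤ 1 + lev 1 θ x y := by
  cases x with
  | nil => rw [lev_nil, lev_nil]; push_cast [List.length_cons]; linarith
  | cons a x => rw [lev_cc]; exact le_trans (min_le_right _ _) (min_le_left _ _)

theorem lev_sub_le (a b : Bool) (x y : List Bool) :
    lev 1 θ (a::x) (b::y) ≤ (if a = b then 0 else θ) + lev 1 θ x y := by
  rw [lev_cc]; exact le_trans (min_le_right _ _) (min_le_right _ _)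

theorem lev_cons_cons_le (a : Bool) (x y : List Bool) :
    lev 1 θ (a::x) (a::y) ≤ lev 1 θ x y := by
  have := lev_sub_le (θ := θ) a a x y
  simpa using this

theorem le_lev_right (hθ : 0 ≤ θ) : ∀ x y : List Bool,
    (y.length : ℝ) - x.length ≤ lev 1 θ x y := by
  suffices H : ∀ N x y, x.length + y.length ≤ N →
      (y.length : ℝ) - (x.length : ℝ) ≤ lev 1 θ x y from fun x y => H _ x y le_rfl
  intro N
  induction N with
  | zero => intro x y h; cases x <;> cases y <;> simp_all [lev]
  | succ N ih =>
    intro x y h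
    match x, y with
    | [], y => rw [lev_nil]; simp
    | x, [] =>
      rw [lev_nil']
      have : (0:ℝ) ≤ x.length := by positivity
      simp only [List.length_nil, Nat.cast_zero]
      linarith
    | a::x, b::y =>
      rw [lev_cc]
      simp only [List.length_cons] at h ⊢
      have h1 := ih x (b::y) (by simp only [List.length_cons]; omega)
      have h2 := ih (a::x) y (by simp only [List.length_cons]; omega)
      have h3 := ih x y (by omega)
      simp only [List.length_cons] at h1 h2
      push_cast at h1 h2
      rw [le_min_iff, le_min_iff]
      refine ⟨by push_cast; linarith, by push_cast; linarith, ?_⟩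
      split <;> (push_cast; linarith)

theorem le_lev_left (hθ : 0 ≤ θ) : ∀ x y : List Bool,
    (x.length : ℝ) - y.length ≤ lev 1 θ x y := by
  suffices H : ∀ N x y, x.length + y.length ≤ N →
      (x.length : ℝ) - (y.length : ℝ) ≤ lev 1 θ x y from fun x y => H _ x y le_rfl
  intro N
  induction N with
  | zero => intro x y h; cases x <;> cases y <;> simp_all [lev]
  | succ N ih =>
    intro x y h
    match x, y with
    | [], y =>
      rw [lev_nil]
      have : (0:ℝ) ≤ y.length := by positivity
      simp only [List.length_nil, Nat.cast_zero]
      linarith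
    | x, [] => rw [lev_nil']; simp
    | a::x, b::y =>
      rw [lev_cc]
      simp only [List.length_cons] at h ⊢
      have h1 := ih x (b::y) (by simp only [List.length_cons]; omega)
      have h2 := ih (a::x) y (by simp only [List.length_cons]; omega)
      have h3 := ih x y (by omega)
      simp only [List.length_cons] at h1 h2
      push_cast at h1 h2
      rw [le_min_iff, le_min_iff]
      refine ⟨by push_cast; linarith, by push_cast; linarith, ?_⟩
      split <;> (push_cast; linarith)

theorem lev_le_of_sublist (hθ : 0 ≤ θ) {x y : List Bool} (h : List.Sublist x y) :
    lev 1 θ x y ≤ (y.length : ℝ) - x.length := by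
  induction h with
  | slnil => simp [lev]
  | cons b h ih =>
    refine le_trans (lev_ins_le hθ b _ _) ?_
    simp only [List.length_cons]
    push_cast
    linarith
  | cons_cons a h ih =>
    refine le_trans (lev_cons_cons_le a _ _) ?_
    simp only [List.length_cons]
    push_cast
    linarith

theorem lev_le_of_sublist' (hθ : 0 ≤ θ) {x y : List Bool} (h : List.Sublist x y) :
    lev 1 θ y x ≤ (y.length : ℝ) - x.length := by
  induction h with
  | slnil => simp [lev]
  | cons b h ih =>
    refine le_trans (lev_del_le hθ b _ _) ?_
    simp only [List.length_cons]
    push_cast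
    linarith
  | cons_cons a h ih =>
    refine le_trans (lev_cons_cons_le a _ _) ?_
    simp only [List.length_cons]
    push_cast
    linarith

theorem lev_eq_of_sublist (hθ : 0 ≤ θ) {x y : List Bool} (h : List.Sublist x y) :
    lev 1 θ x y = (y.length : ℝ) - x.length :=
  le_antisymm (lev_le_of_sublist hθ h) (le_lev_right hθ x y)

theorem lev_eq_of_sublist' (hθ : 0 ≤ θ) {x y : List Bool} (h : List.Sublist x y) :
    lev 1 θ y x = (y.length : ℝ) - x.length :=
  le_antisymm (lev_le_of_sublist' hθ h) (le_lev_left hθ y x)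

theorem lev_strip_ge (hθ : 0 ≤ θ) : ∀ x y (a : Bool),
    lev 1 θ x y ≤ lev 1 θ (x ++ [a]) (y ++ [a]) := by
  suffices H : ∀ N x y (a : Bool), x.length + y.length ≤ N →
      lev 1 θ x y ≤ lev 1 θ (x ++ [a]) (y ++ [a]) from fun x y a => H _ x y a le_rfl
  intro N
  induction N with
  | zero =>
    intro x y a h
    cases x <;> cases y <;> simp_all [lev_self hθ]
  | succ N ih =>
    intro x y a h
    match x, y with
    | [], y =>
      rw [lev_nil, List.nil_append]
      have := le_lev_right hθ [a] (y ++ [a])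
      simp only [List.length_append, List.length_singleton] at this
      push_cast at this ⊢
      linarith
    | x, [] =>
      rw [lev_nil', List.nil_append]
      have := le_lev_left hθ (x ++ [a]) [a]
      simp only [List.length_append, List.length_singleton] at this
      push_cast at this ⊢
      linarith
    | b::x, c::y =>
      simp only [List.length_cons] at h
      rw [List.cons_append, List.cons_append, lev_cc b c (x ++ [a]) (y ++ [a])]
      rw [le_min_iff, le_min_iff]
      refine ⟨?_, ?_, ?_⟩
      · have d1 := lev_del_le (θ := θ) hθ b x (c::y)
        have d2 := ih x (c::y) a (by simp only [List.length_cons]; omega)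
        rw [List.cons_append] at d2
        linarith
      · have d1 := lev_ins_le (θ := θ) hθ c (b::x) y
        have d2 := ih (b::x) y a (by simp only [List.length_cons]; omega)
        rw [List.cons_append] at d2
        linarith
      · have d1 := lev_sub_le (θ := θ) b c x y
        have d2 := ih x y a (by omega)
        linarith

theorem lev_strip_le (hθ : 0 ≤ θ) : ∀ x y (a : Bool),
    lev 1 θ (x ++ [a]) (y ++ [a]) ≤ lev 1 θ x y := by
  suffices H : ∀ N x y (a : Bool), x.length + y.length ≤ N →
      lev 1 θ (x ++ [a]) (y ++ [a]) ≤ lev 1 θ x y from fun x y a => H _ x y a le_rfl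
  intro N
  induction N with
  | zero =>
    intro x y a h
    cases x <;> cases y <;> simp_all [lev_self hθ, lev_nil]
  | succ N ih =>
    intro x y a h
    match x, y with
    | [], [] => rw [lev_self hθ, lev_nil]; simp
    | [], c::y =>
      rw [List.nil_append, List.cons_append, lev_nil]
      have d1 := lev_ins_le (θ := θ) hθ c [a] (y ++ [a])
      have d2 := ih [] y a (by simp only [List.length_cons] at h; omega)
      rw [List.nil_append, lev_nil] at d2
      simp only [List.length_cons]
      push_cast
      linarith
    | b::x, [] =>
      rw [List.nil_append, List.cons_append, lev_nil']
      have d1 := lev_del_le (θ := θ) hθ b (x ++ [a]) [a]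
      have d2 := ih x [] a (by simp only [List.length_cons] at h; omega)
      rw [List.nil_append, lev_nil'] at d2
      simp only [List.length_cons]
      push_cast
      linarith
    | b::x, c::y =>
      simp only [List.length_cons] at h
      rw [lev_cc b c x y, le_min_iff, le_min_iff]
      refine ⟨?_, ?_, ?_⟩
      · have d1 := lev_del_le (θ := θ) hθ b (x ++ [a]) ((c::y) ++ [a])
        have d2 := ih x (c::y) a (by simp only [List.length_cons]; omega)
        simp only [List.cons_append] at d1 d2 ⊢
        linarith
      · have d1 := lev_ins_le (θ := θ) hθ c ((b::x) ++ [a]) (y ++ [a])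
        have d2 := ih (b::x) y a (by simp only [List.length_cons]; omega)
        simp only [List.cons_append] at d1 d2 ⊢
        linarith
      · have d1 := lev_sub_le (θ := θ) b c (x ++ [a]) (y ++ [a])
        have d2 := ih x y a (by omega)
        simp only [List.cons_append] at d1 d2 ⊢
        linarith

theorem lev_append_same (hθ : 0 ≤ θ) (p : List Bool) : ∀ x y : List Bool,
    lev 1 θ (x ++ p) (y ++ p) = lev 1 θ x y := by
  induction p with
  | nil => intro x y; simp
  | cons a p ih =>
    intro x y
    have e1 : x ++ a :: p = (x ++ [a]) ++ p := by simp
    have e2 : y ++ a :: p = (y ++ [a]) ++ p := by simp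
    rw [e1, e2, ih]
    exact le_antisymm (lev_strip_le hθ x y a) (lev_strip_ge hθ x y a)

theorem pat_zero : pat 0 = [] := rfl

theorem pat_succ (k : ℕ) : pat (k+1) = false :: true :: pat k := by
  simp [pat, List.replicate_succ]

theorem pat_length (k : ℕ) : (pat k).length = 2 * k := by
  induction k with
  | zero => rfl
  | succ k ih => rw [pat_succ]; simp [ih]; omega

theorem pat_add (a b : ℕ) : pat (a + b) = pat a ++ pat b := by
  rw [pat, pat, pat, List.replicate_add, List.flatten_append]

theorem sublist_pat : ∀ (k : ℕ) (w : List Bool), w.length ≤ k → List.Sublist w (pat k) := by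
  intro k
  induction k with
  | zero =>
    intro w h
    have hw : w = [] := List.eq_nil_of_length_eq_zero (by omega)
    subst hw
    exact List.nil_sublist _
  | succ k ih =>
    intro w h
    match w with
    | [] => exact List.nil_sublist _
    | a::w =>
      rw [pat_succ]
      simp only [List.length_cons] at h
      cases a with
      | false => exact List.Sublist.cons₂ _ (List.Sublist.cons _ (ih w (by omega)))
      | true => exact List.Sublist.cons _ (List.Sublist.cons₂ _ (ih w (by omega)))

theorem sublist_cross {n k m : ℕ} {u v : List Bool} (hu : u.length = n) (hkm : k < m) :
    List.Sublist (u ++ pat (k * n)) (v ++ pat (m * n)) := by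
  have hm : m * n = (n + (m - 1 - k) * n) + k * n := by
    have h1 : m = (m - 1 - k) + 1 + k := by omega
    calc m * n = ((m - 1 - k) + 1 + k) * n := by rw [← h1]
    _ = (n + (m - 1 - k) * n) + k * n := by ring
  have s1 : List.Sublist (u ++ pat (k * n)) (pat (m * n)) := by
    rw [hm, pat_add]
    exact List.Sublist.append (sublist_pat _ u (by omega)) (List.Sublist.refl _)
  exact s1.trans (List.sublist_append_right v _)

/-- The set `L·((01)ⁿ)*`. -/
def MSet (n : ℕ) (L : Set (List Bool)) : Set (List Bool) :=
  {w | ∃ u ∈ L, ∃ k : ℕ, w = u ++ pat (k * n)}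

section MSet

variable {θ : ℝ} {n : ℕ} {L : Set (List Bool)}

theorem mem_MSet {u : List Bool} (hu : u ∈ L) (k : ℕ) : u ++ pat (k * n) ∈ MSet n L :=
  ⟨u, hu, k, rfl⟩

theorem len_append_pat {u : List Bool} (hu : u.length = n) (k : ℕ) :
    (u ++ pat (k * n)).length = n + 2 * (k * n) := by
  simp [pat_length, hu]

theorem n_le_length (hL : ∀ w ∈ L, w.length = n) {w : List Bool} (h : w ∈ MSet n L) :
    n ≤ w.length := by
  obtain ⟨u, hu, k, rfl⟩ := h
  rw [len_append_pat (hL u hu)]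
  omega

/-- distance between words of `MSet` of different lengths, both orientations. -/
theorem lev_of_len_lt (hθ0 : 0 ≤ θ) (hL : ∀ w ∈ L, w.length = n) (hn : 0 < n)
    {w1 w2 : List Bool} (h1 : w1 ∈ MSet n L) (h2 : w2 ∈ MSet n L)
    (hlen : w1.length < w2.length) :
    lev 1 θ w1 w2 = (w2.length : ℝ) - w1.length ∧
      lev 1 θ w2 w1 = (w2.length : ℝ) - w1.length := by
  obtain ⟨u, hu, k, rfl⟩ := h1
  obtain ⟨v, hv, m, rfl⟩ := h2
  have hkm : k < m := by
    rw [len_append_pat (hL u hu), len_append_pat (hL v hv)] at hlen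
    have : k * n < m * n := by omega
    exact Nat.lt_of_mul_lt_mul_right this
  exact ⟨lev_eq_of_sublist hθ0 (sublist_cross (hL u hu) hkm),
    lev_eq_of_sublist' hθ0 (sublist_cross (hL u hu) hkm)⟩

/-- The level of a word in `MSet n L`. -/
def lvl (n : ℕ) (w : List Bool) : ℕ := (w.length - n) / (2 * n)

theorem lvl_spec (hn : 0 < n) {u : List Bool} (hu : u.length = n) (k : ℕ) :
    lvl n (u ++ pat (k * n)) = k := by
  rw [lvl, len_append_pat hu, Nat.add_sub_cancel_left]
  have h2 : 2 * (k * n) = k * (2 * n) := by ring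
  rw [h2, Nat.mul_div_cancel _ (by omega)]

theorem take_spec {u : List Bool} (hu : u.length = n) (p : List Bool) :
    (u ++ p).take n = u :=
  List.take_left' hu

theorem take_mem (hL : ∀ w ∈ L, w.length = n) {w : List Bool} (h : w ∈ MSet n L) :
    w.take n ∈ L := by
  obtain ⟨u, hu, k, rfl⟩ := h
  rw [take_spec (hL u hu)]
  exact hu

theorem dec_spec (hn : 0 < n) (hL : ∀ w ∈ L, w.length = n) {w : List Bool}
    (h : w ∈ MSet n L) : w = w.take n ++ pat (lvl n w * n) := by
  obtain ⟨u, hu, k, rfl⟩ := h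
  rw [take_spec (hL u hu), lvl_spec hn (hL u hu)]

end MSet

section LenEq

variable {θ : ℝ} {n : ℕ} {L : Set (List Bool)}

/-- Step A: the pair relation for an isometry of `MSet n L`. -/
theorem pairRel (hθ0 : 0 ≤ θ) (hn : 0 < n) (hL : ∀ w ∈ L, w.length = n)
    (hne : L.Nonempty) (φ : Equiv.Perm ↥(MSet n L))
    (hφ : ∀ x y : ↥(MSet n L), lev 1 θ (φ x).1 (φ y).1 = lev 1 θ x.1 y.1)
    (x y : ↥(MSet n L)) :
    (φ x).1.length + y.1.length = x.1.length + (φ y).1.length := by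
  obtain ⟨u₀, hu₀⟩ := hne
  set B1 := max x.1.length y.1.length with hB1
  set B2 := max (φ x).1.length (φ y).1.length with hB2
  -- find z deep enough
  set g : ℕ → ↥(MSet n L) := fun j => ⟨u₀ ++ pat (j * n), mem_MSet hu₀ j⟩ with hg
  have glen : ∀ j, (g j).1.length = n + 2 * (j * n) := fun j => len_append_pat (hL u₀ hu₀) j
  have ginj : Function.Injective g := by
    intro i j hij
    have := congrArg (fun z : ↥(MSet n L) => z.1.length) hij
    simp only [glen] at this
    have h2 : i * n = j * n := by omega
    exact Nat.eq_of_mul_eq_mul_right hn h2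
  have hT : {j : ℕ | (φ (g j)).1.length ≤ B2}.Finite := by
    have hfin : {l : List Bool | l.length ≤ B2}.Finite := List.finite_length_le Bool B2
    have hinj : Function.Injective (fun j => (φ (g j)).1) :=
      Subtype.coe_injective.comp (φ.injective.comp ginj)
    have hsub : {j : ℕ | (φ (g j)).1.length ≤ B2} ⊆
        (fun j => (φ (g j)).1) ⁻¹' {l : List Bool | l.length ≤ B2} := fun j hj => hj
    exact (hfin.preimage hinj.injOn).subset hsub
  have hT' : {j : ℕ | (g j).1.length ≤ B1}.Finite := by
    refine (Set.finite_Iic B1).subset ?_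
    intro j hj
    simp only [Set.mem_setOf_eq, glen] at hj
    have : j ≤ j * n := Nat.le_mul_of_pos_right j hn
    simp only [Set.mem_Iic]
    omega
  obtain ⟨j, hj⟩ := ((hT.union hT').infinite_compl).nonempty
  simp only [Set.compl_union, Set.mem_inter_iff, Set.mem_compl_iff, Set.mem_setOf_eq,
    not_le] at hj
  obtain ⟨hj2, hj1⟩ := hj
  set z := g j with hz
  -- the four distance formulas
  have dx := lev_of_len_lt hθ0 hL hn x.2 z.2 (lt_of_le_of_lt (le_max_left _ _) hj1)
  have dy := lev_of_len_lt hθ0 hL hn y.2 z.2 (lt_of_le_of_lt (le_max_right _ _) hj1)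
  have dx' := lev_of_len_lt hθ0 hL hn (φ x).2 (φ z).2
    (lt_of_le_of_lt (le_max_left _ _) hj2)
  have dy' := lev_of_len_lt hθ0 hL hn (φ y).2 (φ z).2
    (lt_of_le_of_lt (le_max_right _ _) hj2)
  have e1 := hφ x z
  have e2 := hφ y z
  rw [dx.1, dx'.1] at e1
  rw [dy.1, dy'.1] at e2
  have : ((φ x).1.length : ℝ) + y.1.length = x.1.length + (φ y).1.length := by linarith
  exact_mod_cast this

theorem len_mono (hθ0 : 0 ≤ θ) (hn : 0 < n) (hL : ∀ w ∈ L, w.length = n)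
    (hne : L.Nonempty) (φ : Equiv.Perm ↥(MSet n L))
    (hφ : ∀ x y : ↥(MSet n L), lev 1 θ (φ x).1 (φ y).1 = lev 1 θ x.1 y.1)
    (x : ↥(MSet n L)) : x.1.length ≤ (φ x).1.length := by
  obtain ⟨u₀, hu₀⟩ := hne
  have h0 : (0:ℕ) * n = 0 := by omega
  set y₀ : ↥(MSet n L) := ⟨u₀ ++ pat (0 * n), mem_MSet hu₀ 0⟩ with hy₀
  have hy₀len : y₀.1.length = n := by
    have := len_append_pat (hL u₀ hu₀) 0
    simpa [hy₀, pat_length] using this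
  have h1 := pairRel hθ0 hn hL ⟨u₀, hu₀⟩ φ hφ x y₀
  have h2 : n ≤ (φ y₀).1.length := n_le_length hL (φ y₀).2
  rw [hy₀len] at h1
  omega

theorem len_eq (hθ0 : 0 ≤ θ) (hn : 0 < n) (hL : ∀ w ∈ L, w.length = n)
    (hne : L.Nonempty) (φ : Equiv.Perm ↥(MSet n L))
    (hφ : ∀ x y : ↥(MSet n L), lev 1 θ (φ x).1 (φ y).1 = lev 1 θ x.1 y.1)
    (x : ↥(MSet n L)) : (φ x).1.length = x.1.length := by
  have hφs : ∀ x y : ↥(MSet n L), lev 1 θ (φ.symm x).1 (φ.symm y).1 = lev 1 θ x.1 y.1 := by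
    intro u v
    have := hφ (φ.symm u) (φ.symm v)
    simpa using this.symm
  have h1 := len_mono hθ0 hn hL hne φ hφ x
  have h2 := len_mono hθ0 hn hL hne φ.symm hφs (φ x)
  simp only [Equiv.symm_apply_apply] at h2
  omega

end LenEq

section Build

variable {θ : ℝ} {n : ℕ} {L : Set (List Bool)}

/-- The identification of `MSet n L` with `L × ℕ`. -/
def EL (hn : 0 < n) (hL : ∀ w ∈ L, w.length = n) : (↥L × ℕ) ≃ ↥(MSet n L) where
  toFun p := ⟨p.1.1 ++ pat (p.2 * n), mem_MSet p.1.2 p.2⟩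
  invFun x := (⟨x.1.take n, take_mem hL x.2⟩, lvl n x.1)
  left_inv p := by
    obtain ⟨u, k⟩ := p
    refine Prod.ext ?_ ?_
    · exact Subtype.ext (take_spec (hL u.1 u.2) _)
    · exact lvl_spec hn (hL u.1 u.2) k
  right_inv x := Subtype.ext (dec_spec hn hL x.2).symm

theorem EL_eta (hn : 0 < n) (hL : ∀ w ∈ L, w.length = n) (x : ↥(MSet n L)) (k : ℕ)
    (h : ((EL hn hL).symm x).2 = k) : EL hn hL (((EL hn hL).symm x).1, k) = x := by
  have h2 : ((((EL hn hL).symm x).1, k) : ↥L × ℕ) = (EL hn hL).symm x := by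
    rw [← h]
  rw [h2, Equiv.apply_symm_apply]

/-- The level-wise permutation of `L × ℕ` induced by a family of permutations. -/
def prodPerm (ψ : ℕ → Equiv.Perm ↥L) : Equiv.Perm (↥L × ℕ) where
  toFun p := (ψ p.2 p.1, p.2)
  invFun p := ((ψ p.2)⁻¹ p.1, p.2)
  left_inv p := by simp
  right_inv p := by simp

/-- Key computation for `permL`. -/
theorem permL_aux (hn : 0 < n) (hL : ∀ w ∈ L, w.length = n)
    (φ : Equiv.Perm ↥(MSet n L)) (hlen : ∀ x, (φ x).1.length = x.1.length)
    (u : ↥L) (k : ℕ) :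
    EL hn hL (((EL hn hL).symm (φ (EL hn hL (u, k)))).1, k) = φ (EL hn hL (u, k)) := by
  apply EL_eta
  show lvl n (φ (EL hn hL (u, k))).1 = k
  rw [lvl, hlen]
  show lvl n (u.1 ++ pat (k * n)) = k
  exact lvl_spec hn (hL u.1 u.2) k

/-- Restriction of an isometry of `MSet n L` to level `k`, as a permutation of `L`. -/
def permL (hθ0 : 0 ≤ θ) (hn : 0 < n) (hL : ∀ w ∈ L, w.length = n) (hne : L.Nonempty)
    (φ : Equiv.Perm ↥(MSet n L))
    (hφ : ∀ x y : ↥(MSet n L), lev 1 θ (φ x).1 (φ y).1 = lev 1 θ x.1 y.1) (k : ℕ) :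
    Equiv.Perm ↥L where
  toFun u := ((EL hn hL).symm (φ (EL hn hL (u, k)))).1
  invFun u := ((EL hn hL).symm (φ.symm (EL hn hL (u, k)))).1
  left_inv u := by
    have e := permL_aux hn hL φ (len_eq hθ0 hn hL hne φ hφ) u k
    show ((EL hn hL).symm (φ.symm (EL hn hL (((EL hn hL).symm (φ (EL hn hL (u, k)))).1, k)))).1 = u
    rw [e, Equiv.symm_apply_apply, Equiv.symm_apply_apply]
  right_inv u := by
    have hφs : ∀ x y : ↥(MSet n L), lev 1 θ (φ.symm x).1 (φ.symm y).1 = lev 1 θ x.1 y.1 := by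
      intro a b
      have := hφ (φ.symm a) (φ.symm b)
      simpa using this.symm
    have e := permL_aux hn hL φ.symm (len_eq hθ0 hn hL hne φ.symm hφs) u k
    show ((EL hn hL).symm (φ (EL hn hL (((EL hn hL).symm (φ.symm (EL hn hL (u, k)))).1, k)))).1 = u
    rw [e, Equiv.apply_symm_apply, Equiv.symm_apply_apply]

theorem permL_apply (hθ0 : 0 ≤ θ) (hn : 0 < n) (hL : ∀ w ∈ L, w.length = n)
    (hne : L.Nonempty) (φ : Equiv.Perm ↥(MSet n L))
    (hφ : ∀ x y : ↥(MSet n L), lev 1 θ (φ x).1 (φ y).1 = lev 1 θ x.1 y.1) (u : ↥L) (k : ℕ) :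
    EL hn hL (permL hθ0 hn hL hne φ hφ k u, k) = φ (EL hn hL (u, k)) :=
  permL_aux hn hL φ (len_eq hθ0 hn hL hne φ hφ) u k

theorem permL_isom (hθ0 : 0 ≤ θ) (hn : 0 < n) (hL : ∀ w ∈ L, w.length = n)
    (hne : L.Nonempty) (φ : Equiv.Perm ↥(MSet n L))
    (hφ : ∀ x y : ↥(MSet n L), lev 1 θ (φ x).1 (φ y).1 = lev 1 θ x.1 y.1) (k : ℕ)
    (u v : ↥L) :
    lev 1 θ (permL hθ0 hn hL hne φ hφ k u).1 (permL hθ0 hn hL hne φ hφ k v).1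
      = lev 1 θ u.1 v.1 := by
  have e1 : (permL hθ0 hn hL hne φ hφ k u).1 ++ pat (k * n) = (φ (EL hn hL (u, k))).1 :=
    congrArg Subtype.val (permL_apply hθ0 hn hL hne φ hφ u k)
  have e2 : (permL hθ0 hn hL hne φ hφ k v).1 ++ pat (k * n) = (φ (EL hn hL (v, k))).1 :=
    congrArg Subtype.val (permL_apply hθ0 hn hL hne φ hφ v k)
  calc lev 1 θ (permL hθ0 hn hL hne φ hφ k u).1 (permL hθ0 hn hL hne φ hφ k v).1
      = lev 1 θ ((permL hθ0 hn hL hne φ hφ k u).1 ++ pat (k * n))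
          ((permL hθ0 hn hL hne φ hφ k v).1 ++ pat (k * n)) :=
        (lev_append_same hθ0 _ _ _).symm
    _ = lev 1 θ (φ (EL hn hL (u, k))).1 (φ (EL hn hL (v, k))).1 := by rw [e1, e2]
    _ = lev 1 θ (EL hn hL (u, k)).1 (EL hn hL (v, k)).1 := hφ _ _
    _ = lev 1 θ u.1 v.1 := lev_append_same hθ0 _ _ _

/-- Lift a family of permutations of `L` to a permutation of `MSet n L`. -/
def liftFam (hn : 0 < n) (hL : ∀ w ∈ L, w.length = n) (ψ : ℕ → Equiv.Perm ↥L) :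
    Equiv.Perm ↥(MSet n L) :=
  ((EL hn hL).symm.trans (prodPerm ψ)).trans (EL hn hL)

theorem liftFam_apply (hn : 0 < n) (hL : ∀ w ∈ L, w.length = n) (ψ : ℕ → Equiv.Perm ↥L)
    (u : ↥L) (k : ℕ) :
    liftFam hn hL ψ (EL hn hL (u, k)) = EL hn hL (ψ k u, k) := by
  simp only [liftFam, Equiv.trans_apply, Equiv.symm_apply_apply]
  rfl

theorem liftFam_isom (hθ0 : 0 ≤ θ) (hn : 0 < n) (hL : ∀ w ∈ L, w.length = n)
    (ψ : ℕ → Equiv.Perm ↥L)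
    (hψ : ∀ k (u v : ↥L), lev 1 θ (ψ k u).1 (ψ k v).1 = lev 1 θ u.1 v.1) :
    ∀ x y : ↥(MSet n L),
      lev 1 θ (liftFam hn hL ψ x).1 (liftFam hn hL ψ y).1 = lev 1 θ x.1 y.1 := by
  intro x y
  obtain ⟨⟨u, k⟩, rfl⟩ : ∃ p, (EL hn hL) p = x := ⟨(EL hn hL).symm x, (EL hn hL).apply_symm_apply x⟩
  obtain ⟨⟨v, m⟩, rfl⟩ : ∃ p, (EL hn hL) p = y := ⟨(EL hn hL).symm y, (EL hn hL).apply_symm_apply y⟩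
  rw [liftFam_apply, liftFam_apply]
  show lev 1 θ ((ψ k u).1 ++ pat (k * n)) ((ψ m v).1 ++ pat (m * n))
      = lev 1 θ (u.1 ++ pat (k * n)) (v.1 ++ pat (m * n))
  rcases Nat.lt_trichotomy k m with h | h | h
  · have hlt1 : ((ψ k u).1 ++ pat (k * n)).length < ((ψ m v).1 ++ pat (m * n)).length := by
      rw [len_append_pat (hL _ (ψ k u).2), len_append_pat (hL _ (ψ m v).2)]
      have : k * n < m * n := Nat.mul_lt_mul_of_lt_of_le h (le_refl n) hn
      omega
    have hlt2 : (u.1 ++ pat (k * n)).length < (v.1 ++ pat (m * n)).length := by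
      rw [len_append_pat (hL _ u.2), len_append_pat (hL _ v.2)]
      have : k * n < m * n := Nat.mul_lt_mul_of_lt_of_le h (le_refl n) hn
      omega
    rw [(lev_of_len_lt hθ0 hL hn (mem_MSet (ψ k u).2 k) (mem_MSet (ψ m v).2 m) hlt1).1,
      (lev_of_len_lt hθ0 hL hn (mem_MSet u.2 k) (mem_MSet v.2 m) hlt2).1,
      len_append_pat (hL _ (ψ k u).2), len_append_pat (hL _ (ψ m v).2),
      len_append_pat (hL _ u.2), len_append_pat (hL _ v.2)]
  · subst h
    rw [lev_append_same hθ0, lev_append_same hθ0]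
    exact hψ k u v
  · have hlt1 : ((ψ m v).1 ++ pat (m * n)).length < ((ψ k u).1 ++ pat (k * n)).length := by
      rw [len_append_pat (hL _ (ψ k u).2), len_append_pat (hL _ (ψ m v).2)]
      have : m * n < k * n := Nat.mul_lt_mul_of_lt_of_le h (le_refl n) hn
      omega
    have hlt2 : (v.1 ++ pat (m * n)).length < (u.1 ++ pat (k * n)).length := by
      rw [len_append_pat (hL _ u.2), len_append_pat (hL _ v.2)]
      have : m * n < k * n := Nat.mul_lt_mul_of_lt_of_le h (le_refl n) hn
      omega
    rw [(lev_of_len_lt hθ0 hL hn (mem_MSet (ψ m v).2 m) (mem_MSet (ψ k u).2 k) hlt1).2,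
      (lev_of_len_lt hθ0 hL hn (mem_MSet v.2 m) (mem_MSet u.2 k) hlt2).2,
      len_append_pat (hL _ (ψ k u).2), len_append_pat (hL _ (ψ m v).2),
      len_append_pat (hL _ u.2), len_append_pat (hL _ v.2)]

end Build

theorem trivial_case {θ : ℝ} {M' L' : Set (List Bool)} (h1 : Subsingleton ↥M')
    (h2 : Subsingleton ↥L') :
    Nonempty (↥(IsomGroup (lev 1 θ) M') ≃* (ℕ → ↥(IsomGroup (lev 1 θ) L'))) := by
  haveI := h1; haveI := h2
  haveI hU1 : Unique ↥(IsomGroup (lev 1 θ) M') :=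
    ⟨⟨1⟩, fun a => Subtype.ext (Subsingleton.elim _ _)⟩
  haveI hU2 : Unique ↥(IsomGroup (lev 1 θ) L') :=
    ⟨⟨1⟩, fun a => Subtype.ext (Subsingleton.elim _ _)⟩
  exact ⟨{ toEquiv := Equiv.ofUnique _ _, map_mul' := fun a b => Subsingleton.elim _ _ }⟩

end SL15

/-- For `L ⊆ {0,1}ⁿ` and `θ ∈ (0, 2]`,
`Isom_θ(L·((01)ⁿ)*) ≅ Isom_θ(L)^ℕ`, where
`L·((01)ⁿ)* = {u·(01)^{kn} : u ∈ L, k ∈ ℕ₀}`. -/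
theorem stmt_15 (n : ℕ) (L : Set (List Bool)) (hL : ∀ w ∈ L, w.length = n)
    (θ : ℝ) (hθ : θ ∈ Set.Ioc (0 : ℝ) 2) :
    Nonempty (IsomGroup (lev 1 θ) {w | ∃ u ∈ L, ∃ k : ℕ, w = u ++ pat (k * n)} ≃*
      (ℕ → IsomGroup (lev 1 θ) L)) := by
  have hθ0 : 0 ≤ θ := hθ.1.le
  rcases Nat.eq_zero_or_pos n with hn0 | hn
  · subst hn0
    have keyL : ∀ w ∈ L, w = [] := fun w hw => List.eq_nil_of_length_eq_zero (hL w hw)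
    have keyM : ∀ w ∈ {w | ∃ u ∈ L, ∃ k : ℕ, w = u ++ pat (k * 0)}, w = [] := by
      rintro w ⟨u, hu, k, rfl⟩
      have : (k * 0 : ℕ) = 0 := by omega
      rw [this, SL15.pat_zero, List.append_nil]
      exact keyL u hu
    exact SL15.trivial_case
      ⟨fun a b => Subtype.ext ((keyM _ a.2).trans (keyM _ b.2).symm)⟩
      ⟨fun a b => Subtype.ext ((keyL _ a.2).trans (keyL _ b.2).symm)⟩
  rcases L.eq_empty_or_nonempty with hLe | hne
  · subst hLe
    have keyM : ∀ w, w ∉ {w | ∃ u ∈ (∅ : Set (List Bool)), ∃ k : ℕ, w = u ++ pat (k * n)} := by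
      rintro w ⟨u, hu, -⟩
      exact hu
    exact SL15.trivial_case
      ⟨fun a b => absurd a.2 (keyM _)⟩
      ⟨fun a b => absurd a.2 (fun h => h)⟩
  -- main case
  show Nonempty (↥(IsomGroup (lev 1 θ) (SL15.MSet n L)) ≃* (ℕ → ↥(IsomGroup (lev 1 θ) L)))
  refine ⟨MulEquiv.mk' ⟨
    fun φ k => ⟨SL15.permL hθ0 hn hL hne φ.1 φ.2 k, SL15.permL_isom hθ0 hn hL hne φ.1 φ.2 k⟩,
    fun ψ => ⟨SL15.liftFam hn hL (fun k => (ψ k).1),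
      SL15.liftFam_isom hθ0 hn hL _ (fun k => (ψ k).2)⟩,
    ?_, ?_⟩ ?_⟩
  · -- left inverse : B (F φ) = φ
    intro φ
    apply Subtype.ext
    apply Equiv.ext
    intro x
    obtain ⟨⟨u, k⟩, rfl⟩ : ∃ p, (SL15.EL hn hL) p = x :=
      ⟨(SL15.EL hn hL).symm x, (SL15.EL hn hL).apply_symm_apply x⟩
    show SL15.liftFam hn hL _ (SL15.EL hn hL (u, k)) = φ.1 (SL15.EL hn hL (u, k))
    rw [SL15.liftFam_apply]
    exact SL15.permL_apply hθ0 hn hL hne φ.1 φ.2 u k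
  · -- right inverse : F (B ψ) = ψ
    intro ψ
    funext k
    apply Subtype.ext
    apply Equiv.ext
    intro u
    show ((SL15.EL hn hL).symm
      (SL15.liftFam hn hL (fun k => (ψ k).1) (SL15.EL hn hL (u, k)))).1 = (ψ k).1 u
    rw [SL15.liftFam_apply, Equiv.symm_apply_apply]
  · -- multiplicativity
    intro φ χ
    funext k
    apply Subtype.ext
    apply Equiv.ext
    intro u
    show ((SL15.EL hn hL).symm ((φ * χ).1 (SL15.EL hn hL (u, k)))).1 =
      ((SL15.EL hn hL).symm (φ.1 (SL15.EL hn hL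
        (SL15.permL hθ0 hn hL hne χ.1 χ.2 k u, k)))).1
    rw [SL15.permL_apply hθ0 hn hL hne χ.1 χ.2 u k]
    rfl
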